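/- arXiv:1906.07121 — 3 statements merged into one kernel-verified Lean document; each statement's English description precedes it below -/
import Mathlib

section
/- Let 𝒪 be an order in an imaginary quadratic field K of discriminant Δ, and let I be an ideal of 𝒪 which is primitive (the additive quotient group 𝒪/I is cyclic), proper (its multiplier ring {x ∈ K : xI ⊆ I} equals 𝒪), and real (stable under complex conjugation). If I has index N in 𝒪, then N divides Δ. -/
variable {K : Type*} [Field K]

/-- An ideal `I` of an order `O` in a quadratic field is *primitive*
if the additive quotient group `O/I` is cyclic. -/
def IsPrimitiveIdeal (O : Subring K) (I : Ideal O) : Prop :=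
  IsAddCyclic (O ⧸ I)

/-- An ideal `I` of an order `O ⊆ K` is *proper* if its multiplier ring
`{x ∈ K : xI ⊆ I}` equals `O`. -/
def IsProperIdeal (O : Subring K) (I : Ideal O) : Prop :=
  ∀ x : K, (∀ y : O, y ∈ I → ∃ z : O, z ∈ I ∧ (z : K) = x * (y : K)) ↔ x ∈ O

/-- An ideal `I` of an order `O ⊆ K` is *real* (with respect to the nontrivial automorphism
`σ` of `K`, i.e. complex conjugation) if it is stable under `σ`. -/
def IsRealIdeal (σ : K →+* K) (O : Subring K) (I : Ideal O) : Prop :=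
  ∀ y : O, y ∈ I → ∃ z : O, z ∈ I ∧ (z : K) = σ (y : K)

set_option maxHeartbeats 1000000 in
set_option synthInstance.maxHeartbeats 400000 in
theorem aux_dvd
    (K : Type*) [Field K] (σ : K →+* K)
    (Δ c0 : ℤ) (hc04 : 4 * c0 = Δ ^ 2 - Δ)
    (τ : K) (hτ : τ ^ 2 - (Δ : K) * τ + (c0 : K) = 0)
    (hστ : σ τ = (Δ : K) - τ)
    (O : Subring K) (hτO : τ ∈ O)
    (I : Ideal O)
    (hprim : IsAddCyclic (O ⧸ I))
    (hreal : ∀ y : O, y ∈ I → ∃ z : O, z ∈ I ∧ (z : K) = σ (y : K))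
    (N : ℕ) (hN : 0 < N)
    (hindex : Nat.card (O ⧸ I) = N) :
    (N : ℤ) ∣ Δ := by
  set t : O := ⟨τ, hτO⟩ with ht
  have hfin : Finite (O ⧸ I) := Nat.finite_of_card_ne_zero (by rw [hindex]; omega)
  set π := Ideal.Quotient.mk I with hπ
  have hNI : ((N : ℤ) : O) ∈ I := by
    apply Ideal.Quotient.eq_zero_iff_mem.mp
    rw [map_intCast]
    push_cast
    rw [show ((N : ℕ) : O ⧸ I) = N • (1 : O ⧸ I) by simp [nsmul_eq_mul], ← hindex]
    exact card_nsmul_eq_zero'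
  set J : Ideal ℤ := I.comap (Int.castRingHom O) with hJ
  set a : ℤ := Submodule.IsPrincipal.generator J with ha
  have hJa : ∀ m : ℤ, ((m : O) ∈ I) ↔ a ∣ m := fun m =>
    Submodule.IsPrincipal.mem_iff_generator_dvd J (x := m)
  have haI : ((a : ℤ) : O) ∈ I := (hJa a).mpr dvd_rfl
  obtain ⟨g, hg⟩ := hprim
  have hgord : addOrderOf g = N := by
    rw [addOrderOf_eq_card_of_forall_mem_zmultiples hg, hindex]
  have hNa : (N : ℤ) ∣ a := by
    obtain ⟨x, hx⟩ := Ideal.Quotient.mk_surjective (I := I) g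
    have hag : a • g = 0 := by
      rw [← hx, ← map_zsmul π, zsmul_eq_mul]
      exact Ideal.Quotient.eq_zero_iff_mem.mpr (I.mul_mem_right x haI)
    have := addOrderOf_dvd_iff_zsmul_eq_zero.mpr hag
    rwa [hgord] at this
  have hdvd : ∀ m : ℤ, ((m : O) ∈ I) → (N : ℤ) ∣ m :=
    fun m hm => dvd_trans hNa ((hJa m).mp hm)
  have hord1 : addOrderOf (π 1) = N := by
    have h1 : addOrderOf (π 1) ∣ N := by
      apply addOrderOf_dvd_of_nsmul_eq_zero
      rw [← map_nsmul π, show (N • (1 : O) : O) = ((N : ℤ) : O) by push_cast; simp [nsmul_eq_mul]]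
      exact Ideal.Quotient.eq_zero_iff_mem.mpr hNI
    have h2 : N ∣ addOrderOf (π 1) := by
      have hmem : (((addOrderOf (π 1) : ℤ)) : O) ∈ I := by
        apply Ideal.Quotient.eq_zero_iff_mem.mp
        rw [map_intCast]
        push_cast
        rw [show ((addOrderOf (π 1) : ℕ) : O ⧸ I) = addOrderOf (π 1) • (1 : O ⧸ I) by
          simp [nsmul_eq_mul]]
        rw [show (1 : O ⧸ I) = π 1 by simp]
        exact addOrderOf_nsmul_eq_zero (π 1)
      exact_mod_cast hdvd _ hmem
    exact Nat.dvd_antisymm h1 h2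
  have htop : AddSubgroup.zmultiples (π 1) = ⊤ := by
    apply AddSubgroup.eq_top_of_card_eq
    rw [Nat.card_zmultiples, hord1, hindex]
  obtain ⟨k, hk⟩ : ∃ k : ℤ, k • π 1 = π t := by
    have : π t ∈ AddSubgroup.zmultiples (π 1) := htop ▸ AddSubgroup.mem_top _
    exact AddSubgroup.mem_zmultiples_iff.mp this
  set b : ℤ := -k with hb
  have hbt : ((b : O) + t) ∈ I := by
    apply Ideal.Quotient.eq_zero_iff_mem.mp
    rw [map_add, map_intCast, ← hk]
    rw [show ((b : ℤ) : O ⧸ I) = b • π 1 by simp [zsmul_eq_mul]]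
    rw [hb]
    simp
  have hMI : (((b ^ 2 + Δ * b + c0 : ℤ)) : O) ∈ I := by
    have h3 := I.sub_mem (I.mul_mem_left (((b + Δ : ℤ) : O)) hbt) (I.mul_mem_left t hbt)
    have he : (((b + Δ : ℤ) : O)) * ((b : O) + t) - t * ((b : O) + t)
        = ((b ^ 2 + Δ * b + c0 : ℤ) : O) := by
      apply Subtype.ext
      push_cast
      linear_combination (-1 : K) * hτ
    rwa [he] at h3
  have hM : (N : ℤ) ∣ (b ^ 2 + Δ * b + c0) := hdvd _ hMI
  obtain ⟨z, hzI, hz⟩ := hreal ((b : O) + t) hbt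
  have hz' : z + ((b : O) + t) = ((2 * b + Δ : ℤ) : O) := by
    apply Subtype.ext
    have h4 : ((((b : O) + t : O)) : K) = (b : K) + τ := by push_cast; rfl
    push_cast
    rw [hz, h4, map_add, map_intCast, hστ]
    ring_nf
    norm_cast
    simp [ht]
  have h2b : (N : ℤ) ∣ (2 * b + Δ) := hdvd _ (by rw [← hz']; exact I.add_mem hzI hbt)
  have hΔeq : Δ = (2 * b + Δ) ^ 2 - 4 * (b ^ 2 + Δ * b + c0) := by linear_combination hc04
  rw [hΔeq]
  exact dvd_sub (dvd_pow h2b two_ne_zero) (hM.mul_left 4)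

set_option maxHeartbeats 1000000 in
set_option synthInstance.maxHeartbeats 400000 in
/-- Let `𝒪 = ℤ[τ]` be the order of discriminant `Δ` in an imaginary quadratic
field `K` with complex conjugation `σ`.  If `I` is a primitive, proper, real ideal of `𝒪`
of index `N`, then `N ∣ Δ`. -/
theorem index_dvd_disc_of_primitive_proper_real
    (K : Type*) [Field K] [Algebra ℚ K]
    (hdim : Module.finrank ℚ K = 2) (himag : IsEmpty (K →+* ℝ))
    (σ : K →+* K) (hσ : σ ≠ RingHom.id K)
    (Δ : ℤ) (hΔneg : Δ < 0) (hΔmod : Δ % 4 = 0 ∨ Δ % 4 = 1)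
    (τ : K) (hτ : τ ^ 2 - (Δ : K) * τ + (((Δ ^ 2 - Δ) / 4 : ℤ) : K) = 0)
    (I : Ideal (Subring.closure {τ} : Subring K))
    (hprim : IsPrimitiveIdeal (Subring.closure {τ}) I)
    (hprop : IsProperIdeal (Subring.closure {τ}) I)
    (hreal : IsRealIdeal σ (Subring.closure {τ}) I)
    (N : ℕ) (hN : 0 < N)
    (hindex : Nat.card ((Subring.closure {τ} : Subring K) ⧸ I) = N) :
    (N : ℤ) ∣ Δ := by
  have hchar : CharZero K := charZero_of_injective_algebraMap (algebraMap ℚ K).injective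
  have hτO : τ ∈ Subring.closure {τ} := Subring.subset_closure (Set.mem_singleton τ)
  set c0 : ℤ := (Δ ^ 2 - Δ) / 4 with hc0def
  have hc0 : (4 : ℤ) ∣ Δ ^ 2 - Δ := by
    obtain ⟨k, hk | hk⟩ : ∃ k, Δ = 4 * k ∨ Δ = 4 * k + 1 := by
      rcases hΔmod with h | h
      · exact ⟨Δ / 4, Or.inl (by omega)⟩
      · exact ⟨Δ / 4, Or.inr (by omega)⟩
    · exact ⟨4 * k ^ 2 - k, by subst hk; ring⟩
    · exact ⟨4 * k ^ 2 + k, by subst hk; ring⟩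
  have hc04 : 4 * c0 = Δ ^ 2 - Δ := Int.mul_ediv_cancel' hc0
  -- τ is irrational
  have hirr : ∀ q : ℚ, (q : K) ≠ τ := by
    intro q hq
    rw [← hq] at hτ
    have h1 : ((q ^ 2 - (Δ : ℚ) * q + (c0 : ℚ) : ℚ) : K) = ((0 : ℚ) : K) := by
      push_cast
      convert hτ using 2
    have h2 : q ^ 2 - (Δ : ℚ) * q + (c0 : ℚ) = 0 := Rat.cast_injective h1
    have h3 : (0 : ℚ) ≤ (2 * q - Δ) ^ 2 := sq_nonneg _
    have h4 : (4 : ℚ) * (c0 : ℚ) = (Δ : ℚ) ^ 2 - (Δ : ℚ) := by exact_mod_cast hc04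
    have h5 : ((Δ : ℚ)) < 0 := by exact_mod_cast hΔneg
    nlinarith [h2, h3, h4, h5]
  -- σ fixes Δ etc., and στ = Δ - τ
  have hστ : σ τ = (Δ : K) - τ := by
    have h1 : σ τ ^ 2 - (Δ : K) * σ τ + ((c0 : ℤ) : K) = 0 := by
      have := congrArg σ hτ
      simpa [map_sub, map_add, map_pow, map_mul, map_intCast] using this
    have h2 : (σ τ - τ) * (σ τ - ((Δ : K) - τ)) = 0 := by linear_combination h1 - hτ
    rcases mul_eq_zero.mp h2 with h | h
    · exfalso
      have hfix : σ τ = τ := sub_eq_zero.mp h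
      -- build basis and show σ = id
      have hind : LinearIndependent ℚ ![1, τ] := by
        rw [linearIndependent_fin2]
        constructor
        · simpa using fun h0 : τ = 0 => hirr 0 (by simp [h0])
        · intro a ha
          simp only [Matrix.cons_val_one, Matrix.head_cons, Matrix.cons_val_zero] at ha
          have ha' : (a : K) * τ = 1 := by
            rw [← ha, Algebra.smul_def]
            congr 1
            exact (eq_ratCast (algebraMap ℚ K) a).symm
          have ha0 : a ≠ 0 := by rintro rfl; simp at ha'
          have haK : (a : K) ≠ 0 := Rat.cast_ne_zero.mpr ha0
          apply hirr a⁻¹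
          push_cast
          exact (eq_inv_of_mul_eq_one_right ha').symm
      have hbasis := basisOfLinearIndependentOfCardEqFinrank hind (by simp [hdim])
      apply hσ
      ext x
      have hx : x ∈ Submodule.span ℚ (Set.range ![1, τ]) := by
        rw [← coe_basisOfLinearIndependentOfCardEqFinrank hind (by simp [hdim]), Module.Basis.span_eq]
        trivial
      rw [Submodule.mem_span_range_iff_exists_fun] at hx
      obtain ⟨c, hc⟩ := hx
      rw [← hc]
      rw [Fin.sum_univ_two]
      simp only [Matrix.cons_val_zero, Matrix.cons_val_one, Matrix.head_cons]
      have hsm : ∀ (q : ℚ) (y : K), q • y = (q : K) * y := by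
        intro q y
        rw [Algebra.smul_def]
        congr 1
        exact eq_ratCast (algebraMap ℚ K) q
      rw [hsm, hsm]
      simp [map_add, map_mul, map_ratCast, hfix]
    · exact sub_eq_zero.mp h
  exact aux_dvd K σ Δ c0 hc04 τ hτ hστ _ hτO I hprim hreal N hN hindex
end

section
/- Let 𝒪 be an order in an imaginary quadratic field, and let N = ℓ₁^{a₁} ⋯ ℓ_r^{a_r} be the prime factorization of a positive integer N. Then there exists a primitive, proper, real ideal of 𝒪 of index N if and only if for each i with 1 ≤ i ≤ r there exists a primitive, proper, real ideal of 𝒪 of index ℓ_i^{a_i}. -/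
set_option linter.unusedSectionVars false
set_option linter.unusedVariables false
set_option maxHeartbeats 1000000
set_option synthInstance.maxHeartbeats 400000



variable {K : Type*} [Field K]

section
variable {K : Type*} [Field K] [Algebra ℚ K]

lemma aux_cz : CharZero K :=
  charZero_of_injective_algebraMap (algebraMap ℚ K).injective

lemma aux_ratne {τ : K} (hirr : τ ∉ Set.range (algebraMap ℚ K)) (q : ℚ) : (q : K) ≠ τ := by
  intro h
  exact hirr ⟨q, by rw [eq_ratCast (algebraMap ℚ K) q, h]⟩

lemma aux_unique {τ : K} (hirr : τ ∉ Set.range (algebraMap ℚ K)) {q r q' r' : ℚ}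
    (h : (q : K) + (r : K) * τ = (q' : K) + (r' : K) * τ) : q = q' ∧ r = r' := by
  haveI : CharZero K := aux_cz
  by_cases hr : r = r'
  · subst hr
    refine ⟨?_, rfl⟩
    have h2 : (q : K) = (q' : K) := by linear_combination h
    exact_mod_cast h2
  · exfalso
    have hrr : ((r' - r : ℚ) : K) ≠ 0 := by
      rw [Rat.cast_ne_zero]
      exact sub_ne_zero.mpr (Ne.symm hr)
    apply aux_ratne hirr ((q - q')/(r' - r))
    rw [Rat.cast_div]
    rw [div_eq_iff hrr]
    push_cast
    linear_combination h

lemma aux_unique_int {τ : K} (hirr : τ ∉ Set.range (algebraMap ℚ K)) {u v u' v' : ℤ}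
    (h : (u : K) + (v : K) * τ = (u' : K) + (v' : K) * τ) : u = u' ∧ v = v' := by
  have h2 : ((u:ℚ) : K) + ((v:ℚ) : K) * τ = ((u':ℚ) : K) + ((v':ℚ) : K) * τ := by
    push_cast
    exact h
  have := aux_unique hirr h2
  exact ⟨by exact_mod_cast this.1, by exact_mod_cast this.2⟩

lemma mem_ztau {τ : K} {b c : ℤ} (hbc : τ ^ 2 + (b : K) * τ + (c : K) = 0) (x : K) :
    x ∈ Subring.closure {τ} ↔ ∃ u v : ℤ, x = (u : K) + (v : K) * τ := by
  constructor
  · intro hx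
    let S : Subring K :=
      { carrier := {x | ∃ u v : ℤ, x = (u : K) + (v : K) * τ}
        zero_mem' := ⟨0, 0, by push_cast; ring⟩
        one_mem' := ⟨1, 0, by push_cast; ring⟩
        add_mem' := by
          rintro a b' ⟨u, v, rfl⟩ ⟨u', v', rfl⟩
          exact ⟨u + u', v + v', by push_cast; ring⟩
        neg_mem' := by
          rintro a ⟨u, v, rfl⟩
          exact ⟨-u, -v, by push_cast; ring⟩
        mul_mem' := by
          rintro a b' ⟨u, v, rfl⟩ ⟨u', v', rfl⟩
          refine ⟨u * u' - c * v * v', u * v' + u' * v - b * v * v', ?_⟩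
          push_cast
          linear_combination (v : K) * (v' : K) * hbc }
    have : Subring.closure {τ} ≤ S := Subring.closure_le.mpr (by
      intro y hy
      rcases hy with rfl
      exact ⟨0, 1, by push_cast; ring⟩)
    exact this hx
  · rintro ⟨u, v, rfl⟩
    have hτ : τ ∈ Subring.closure {τ} := Subring.subset_closure rfl
    exact add_mem (intCast_mem _ u) (mul_mem (intCast_mem _ v) hτ)

end


lemma aux_sigma_tau {K : Type*} [Field K] [Algebra ℚ K]
    (hdim : Module.finrank ℚ K = 2)
    (σ : K →+* K) (hσ : σ ≠ RingHom.id K)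
    {τ : K} {b c : ℤ} (hbc : τ ^ 2 + (b : K) * τ + (c : K) = 0)
    (hirr : τ ∉ Set.range (algebraMap ℚ K)) :
    σ τ = -(b : K) - τ := by
  -- linear independence of ![τ, 1]
  have hli : LinearIndependent ℚ ![τ, (1 : K)] := by
    rw [linearIndependent_fin2]
    refine ⟨by simp, fun a ha => ?_⟩
    apply aux_ratne hirr a
    simpa [Algebra.smul_def, eq_ratCast (algebraMap ℚ K) a] using ha
  have hcard : Fintype.card (Fin 2) = Module.finrank ℚ K := by simp [hdim]
  let B := basisOfLinearIndependentOfCardEqFinrank hli hcard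
  have hspan : ∀ x : K, ∃ p q : ℚ, p • τ + q • (1 : K) = x := by
    intro x
    have hx : x ∈ Submodule.span ℚ (Set.range ![τ, (1:K)]) := by
      have hB : Submodule.span ℚ (Set.range ![τ, (1:K)]) = ⊤ := by
        have := B.span_eq
        rwa [coe_basisOfLinearIndependentOfCardEqFinrank] at this
      rw [hB]; trivial
    have hrng : Set.range ![τ, (1:K)] = {τ, (1:K)} := by
      ext y
      simp [Set.mem_range, Fin.exists_fin_two]
      tauto
    rw [hrng] at hx
    exact Submodule.mem_span_pair.mp hx
  -- σ τ is a root of the same quadratic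
  have hroot : (σ τ) ^ 2 + (b : K) * σ τ + (c : K) = 0 := by
    have := congrArg σ hbc
    simpa [map_add, map_mul, map_pow, map_intCast] using this
  have hfac : (σ τ - τ) * (σ τ + ((b : K) + τ)) = 0 := by
    linear_combination hroot - hbc
  rcases mul_eq_zero.mp hfac with h | h
  · exfalso
    have hfix : σ τ = τ := sub_eq_zero.mp h
    apply hσ
    ext x
    rcases hspan x with ⟨p, q, rfl⟩
    have hsm : ∀ (r : ℚ) (y : K), σ (r • y) = r • σ y := fun r y => by
      rw [Algebra.smul_def, Algebra.smul_def, map_mul]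
      congr 1
      rw [eq_ratCast (algebraMap ℚ K) r, map_ratCast]
    simp [map_add, hsm, hfix]
  · have := sub_eq_zero.mp (by linear_combination h : σ τ - (-(b:K) - τ) = 0)
    exact this


lemma aux_coprime_of_no_prime {M k : ℤ} (hM : M ≠ 0)
    (h : ∀ p : ℕ, p.Prime → (p:ℤ) ∣ M → (p:ℤ) ∣ k → False) : IsCoprime M k := by
  rw [Int.isCoprime_iff_gcd_eq_one]
  by_contra hg
  obtain ⟨p, hp, hpd⟩ := Nat.exists_prime_and_dvd hg
  exact h p hp ((Int.natCast_dvd_natCast.mpr hpd).trans (Int.gcd_dvd_left _ _))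
    ((Int.natCast_dvd_natCast.mpr hpd).trans (Int.gcd_dvd_right _ _))

lemma aux_crt (s : Finset ℕ) (n : ℕ → ℕ) (r : ℕ → ℤ)
    (h : (s : Set ℕ).Pairwise fun i j => Nat.Coprime (n i) (n j)) :
    ∃ m : ℤ, ∀ i ∈ s, (n i : ℤ) ∣ (m - r i) := by
  classical
  induction s using Finset.induction_on with
  | empty => exact ⟨0, by simp⟩
  | @insert a s ha ih =>
    obtain ⟨m', hm'⟩ := ih (h.mono (by simp [Finset.subset_insert]))
    have hcop : Nat.Coprime (n a) (∏ i ∈ s, n i) :=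
      Nat.Coprime.prod_right fun i hi =>
        h (Finset.mem_insert_self a s) (Finset.mem_insert_of_mem hi)
          (fun hai => ha (hai ▸ hi))
    have hcopz : IsCoprime ((n a : ℤ)) ((∏ i ∈ s, n i : ℕ) : ℤ) :=
      Nat.isCoprime_iff_coprime.mpr hcop
    obtain ⟨U, V, hUV⟩ := hcopz
    refine ⟨r a * V * ((∏ i ∈ s, n i : ℕ) : ℤ) + m' * U * (n a : ℤ), ?_⟩
    intro i hi
    rcases Finset.mem_insert.mp hi with rfl | hi
    · refine ⟨U * (m' - r i), ?_⟩
      linear_combination (r i) * hUV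
    · have h1 : (n i : ℤ) ∣ ((∏ j ∈ s, n j : ℕ) : ℤ) := by
        exact_mod_cast Int.natCast_dvd_natCast.mpr (Finset.dvd_prod_of_mem n hi)
      have h2 := hm' i hi
      obtain ⟨w, hw⟩ := h1
      obtain ⟨w2, hw2⟩ := h2
      refine ⟨r a * V * w - m' * V * w + w2, ?_⟩
      linear_combination (r a * V - m' * V) * hw + hw2 + m' * hUV

lemma aux_not_unit_prime {p : ℕ} (hp : p.Prime) : ¬ IsUnit (p : ℤ) :=
  (Int.prime_iff_natAbs_prime.mpr (by simpa using hp)).not_unit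

lemma aux_arith (b c : ℤ) (N : ℕ) (hN : 0 < N) :
    (∃ m k : ℤ, m ^ 2 + b * m + c = (N : ℤ) * k ∧ (N : ℤ) ∣ (b + 2 * m) ∧ IsCoprime (N : ℤ) k) ↔
    ∀ ℓ ∈ N.primeFactors, (∃ m k : ℤ,
      m ^ 2 + b * m + c = ((ℓ ^ N.factorization ℓ : ℕ) : ℤ) * k ∧
      ((ℓ ^ N.factorization ℓ : ℕ) : ℤ) ∣ (b + 2 * m) ∧
      IsCoprime ((ℓ ^ N.factorization ℓ : ℕ) : ℤ) k) := by
  have hprod : ∏ ℓ ∈ N.primeFactors, ℓ ^ N.factorization ℓ = N := by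
    rw [← Nat.support_factorization]
    exact Nat.factorization_prod_pow_eq_self hN.ne'
  constructor
  · rintro ⟨m, k, hfm, hb2, hcop⟩ ℓ hℓ
    obtain ⟨hp, hdvd, -⟩ := Nat.mem_primeFactors.mp hℓ
    set a := N.factorization ℓ with ha
    obtain ⟨N₁, hN₁⟩ := Nat.ordProj_dvd N ℓ
    have hN₁' : N₁ = N / ℓ ^ a := by
      rw [hN₁, Nat.mul_div_cancel_left _ (pow_pos hp.pos _)]
    refine ⟨m, (N₁ : ℤ) * k, ?_, ?_, ?_⟩
    · rw [hfm]; rw_mod_cast [hN₁]; push_cast; ring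
    · exact dvd_trans (by exact_mod_cast Dvd.intro N₁ hN₁.symm) hb2
    · refine IsCoprime.mul_right ?_ (hcop.of_isCoprime_of_dvd_left (by exact_mod_cast Dvd.intro N₁ hN₁.symm))
      have : Nat.Coprime (ℓ ^ a) N₁ := by
        rw [hN₁']
        exact (Nat.coprime_ordCompl hp hN.ne').pow_left a
      exact Nat.isCoprime_iff_coprime.mpr this
  · intro H
    choose mm kk hfm hb2 hcop using H
    classical
    set r : ℕ → ℤ := fun ℓ => if h : ℓ ∈ N.primeFactors then mm ℓ h else 0 with hr
    set n : ℕ → ℕ := fun ℓ => ℓ ^ (N.factorization ℓ + 1) with hn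
    have hpair : ((N.primeFactors : Finset ℕ) : Set ℕ).Pairwise fun i j => Nat.Coprime (n i) (n j) := by
      intro i hi j hj hij
      have hpi := Nat.prime_of_mem_primeFactors hi
      have hpj := Nat.prime_of_mem_primeFactors hj
      simp only [hn]
      exact Nat.Coprime.pow _ _ ((Nat.coprime_primes hpi hpj).mpr hij)
    obtain ⟨m, hm⟩ := aux_crt N.primeFactors n r hpair
    have hkey : ∀ ℓ (hℓ : ℓ ∈ N.primeFactors), ((ℓ : ℤ) ^ (N.factorization ℓ + 1)) ∣
        ((m ^ 2 + b * m + c) - (mm ℓ hℓ ^ 2 + b * mm ℓ hℓ + c)) ∧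
        ((ℓ : ℤ) ^ (N.factorization ℓ + 1)) ∣ (2 * (m - mm ℓ hℓ)) := by
      intro ℓ hℓ
      have h1 := hm ℓ hℓ
      rw [hr] at h1
      simp only [dif_pos hℓ] at h1
      have h1' : ((ℓ : ℤ) ^ (N.factorization ℓ + 1)) ∣ (m - mm ℓ hℓ) := by
        rw [hn] at h1; exact_mod_cast h1
      constructor
      · have he : (m ^ 2 + b * m + c) - (mm ℓ hℓ ^ 2 + b * mm ℓ hℓ + c)
            = (m - mm ℓ hℓ) * (m + mm ℓ hℓ + b) := by ring
        rw [he]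
        exact h1'.mul_right _
      · exact h1'.mul_left _
    have hdvd1 : ∀ ℓ ∈ N.primeFactors, ((ℓ : ℤ) ^ (N.factorization ℓ)) ∣ (m ^ 2 + b * m + c) := by
      intro ℓ hℓ
      have h2 := (hkey ℓ hℓ).1
      have h3 : ((ℓ : ℤ) ^ (N.factorization ℓ)) ∣ (mm ℓ hℓ ^ 2 + b * mm ℓ hℓ + c) := by
        rw [hfm ℓ hℓ]; push_cast; exact Dvd.intro _ rfl
      have h4 : ((ℓ : ℤ) ^ (N.factorization ℓ)) ∣ ((m ^ 2 + b * m + c) - (mm ℓ hℓ ^ 2 + b * mm ℓ hℓ + c)) :=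
        dvd_trans (pow_dvd_pow _ (Nat.le_succ _)) h2
      have h5 := dvd_add h4 h3
      have he : ((m ^ 2 + b * m + c) - (mm ℓ hℓ ^ 2 + b * mm ℓ hℓ + c)) + (mm ℓ hℓ ^ 2 + b * mm ℓ hℓ + c) = m ^ 2 + b * m + c := by ring
      rwa [he] at h5
    have hdvd2 : ∀ ℓ ∈ N.primeFactors, ((ℓ : ℤ) ^ (N.factorization ℓ)) ∣ (b + 2 * m) := by
      intro ℓ hℓ
      have h2 := (hkey ℓ hℓ).2
      have h3 : ((ℓ : ℤ) ^ (N.factorization ℓ)) ∣ (b + 2 * mm ℓ hℓ) := by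
        have h6 := hb2 ℓ hℓ; exact_mod_cast h6
      have h4 : ((ℓ : ℤ) ^ (N.factorization ℓ)) ∣ (2 * (m - mm ℓ hℓ)) :=
        dvd_trans (pow_dvd_pow _ (Nat.le_succ _)) h2
      have h5 := dvd_add h3 h4
      have he : (b + 2 * mm ℓ hℓ) + (2 * (m - mm ℓ hℓ)) = b + 2 * m := by ring
      rwa [he] at h5
    have hpairz : ((N.primeFactors : Finset ℕ) : Set ℕ).Pairwise (Function.onFun IsCoprime fun ℓ => (ℓ : ℤ) ^ (N.factorization ℓ)) := by
      intro i hi j hj hij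
      have hpi := Nat.prime_of_mem_primeFactors hi
      have hpj := Nat.prime_of_mem_primeFactors hj
      have h7 : Nat.Coprime (i ^ N.factorization i) (j ^ N.factorization j) :=
        Nat.Coprime.pow _ _ ((Nat.coprime_primes hpi hpj).mpr hij)
      have h8 := Nat.isCoprime_iff_coprime.mpr h7
      have h9 : IsCoprime ((i:ℤ) ^ N.factorization i) ((j:ℤ) ^ N.factorization j) := by
        push_cast at h8; exact h8
      simpa [Function.onFun] using h9
    have hNprod : ((N : ℕ) : ℤ) = ∏ ℓ ∈ N.primeFactors, (ℓ : ℤ) ^ (N.factorization ℓ) := by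
      conv_lhs => rw [← hprod]
      push_cast; ring
    have hNdvd1 : (N : ℤ) ∣ (m ^ 2 + b * m + c) := by
      rw [hNprod]; exact Finset.prod_dvd_of_coprime hpairz hdvd1
    have hNdvd2 : (N : ℤ) ∣ (b + 2 * m) := by
      rw [hNprod]; exact Finset.prod_dvd_of_coprime hpairz hdvd2
    obtain ⟨k, hk⟩ := hNdvd1
    refine ⟨m, k, hk, hNdvd2, ?_⟩
    apply aux_coprime_of_no_prime (by exact_mod_cast hN.ne')
    intro p hp hpN hpk
    have hpN' : p ∣ N := by exact_mod_cast hpN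
    have hppf : p ∈ N.primeFactors := Nat.mem_primeFactors.mpr ⟨hp, hpN', hN.ne'⟩
    have h5 : ((p : ℤ) ^ (N.factorization p + 1)) ∣ (m ^ 2 + b * m + c) := by
      obtain ⟨N₁, hN₁⟩ := Nat.ordProj_dvd N p
      obtain ⟨k₁, hk₁⟩ := hpk
      rw [hk, hk₁]
      have heN : ((N : ℕ) : ℤ) = (p:ℤ) ^ (N.factorization p) * (N₁ : ℤ) := by
        exact_mod_cast congrArg (Nat.cast : ℕ → ℤ) hN₁
      rw [heN]
      exact ⟨(N₁ : ℤ) * k₁, by ring⟩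
    have h6 : ((p : ℤ) ^ (N.factorization p + 1)) ∣ (mm p hppf ^ 2 + b * mm p hppf + c) := by
      have h7 := (hkey p hppf).1
      have h8 := dvd_sub h5 h7
      have he : (m ^ 2 + b * m + c) - ((m ^ 2 + b * m + c) - (mm p hppf ^ 2 + b * mm p hppf + c)) = mm p hppf ^ 2 + b * mm p hppf + c := by ring
      rwa [he] at h8
    have h8 : (p : ℤ) ∣ kk p hppf := by
      have h9 := hfm p hppf
      rw [h9] at h6
      have h10 : ((p:ℤ) ^ (N.factorization p)) * (p : ℤ) ∣ ((p:ℤ) ^ (N.factorization p)) * kk p hppf := by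
        have he : ((p:ℤ) ^ (N.factorization p)) * (p:ℤ) = (p:ℤ) ^ (N.factorization p + 1) := by ring
        rw [he]
        have he2 : ((p ^ N.factorization p : ℕ) : ℤ) = (p:ℤ) ^ (N.factorization p) := by push_cast; ring
        rwa [he2] at h6
      exact (mul_dvd_mul_iff_left (pow_ne_zero _ (by exact_mod_cast hp.ne_zero : (p:ℤ) ≠ 0))).mp h10
    have h11 : (p : ℤ) ∣ ((p ^ N.factorization p : ℕ) : ℤ) := by
      have ha1 : 0 < N.factorization p := Nat.Prime.factorization_pos_of_dvd hp hN.ne' hpN'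
      push_cast
      exact dvd_pow_self _ ha1.ne'
    exact aux_not_unit_prime hp ((hcop p hppf).isUnit_of_dvd' h11 h8)


lemma aux_coprime_of_no_prime' {M k : ℤ} (hM : M ≠ 0)
    (h : ∀ p : ℕ, p.Prime → (p:ℤ) ∣ M → (p:ℤ) ∣ k → False) : IsCoprime M k := by
  rw [Int.isCoprime_iff_gcd_eq_one]
  by_contra hg
  obtain ⟨p, hp, hpd⟩ := Nat.exists_prime_and_dvd hg
  exact h p hp ((Int.natCast_dvd_natCast.mpr hpd).trans (Int.gcd_dvd_left _ _))
    ((Int.natCast_dvd_natCast.mpr hpd).trans (Int.gcd_dvd_right _ _))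

lemma aux_not_unit_prime' {p : ℕ} (hp : p.Prime) : ¬ IsUnit (p : ℤ) :=
  (Int.prime_iff_natAbs_prime.mpr (by simpa using hp)).not_unit

lemma aux_key {K : Type*} [Field K] [Algebra ℚ K] (σ : K →+* K) (τ : K) (b c : ℤ)
    (hbc : τ ^ 2 + (b : K) * τ + (c : K) = 0)
    (hirr : τ ∉ Set.range (algebraMap ℚ K))
    (hστ : σ τ = -(b : K) - τ)
    (M : ℕ) (hM : 0 < M) :
    (∃ I : Ideal (Subring.closure {τ} : Subring K),
        IsPrimitiveIdeal (Subring.closure {τ}) I ∧ IsProperIdeal (Subring.closure {τ}) I ∧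
        IsRealIdeal σ (Subring.closure {τ}) I ∧
        Nat.card ((Subring.closure {τ} : Subring K) ⧸ I) = M) ↔
    (∃ m k : ℤ, m ^ 2 + b * m + c = (M : ℤ) * k ∧ (M : ℤ) ∣ (b + 2 * m) ∧ IsCoprime (M : ℤ) k) := by
  haveI : CharZero K := aux_cz
  have hmem : ∀ x : K, x ∈ Subring.closure {τ} ↔ ∃ u v : ℤ, x = (u:K) + (v:K) * τ :=
    mem_ztau hbc
  set O := (Subring.closure {τ} : Subring K) with hO
  have hco : ∀ x : O, ∃ u v : ℤ, (x : K) = (u:K) + (v:K) * τ := fun x => (hmem x).mp x.2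
  choose U V hUV using hco
  have hUV' : ∀ (x : O) (u v : ℤ), (x:K) = (u:K) + (v:K) * τ → U x = u ∧ V x = v :=
    fun x u v h => aux_unique_int hirr ((hUV x).symm.trans h)
  have hel : ∀ u v : ℤ, ((u:K) + (v:K) * τ) ∈ O := fun u v => (hmem _).mpr ⟨u, v, rfl⟩
  set el : ℤ → ℤ → O := fun u v => ⟨(u:K) + (v:K) * τ, hel u v⟩ with hel_def
  have hcoel : ∀ u v : ℤ, U (el u v) = u ∧ V (el u v) = v := fun u v => hUV' (el u v) u v rfl
  constructor
  · rintro ⟨I, hprim, hprop, hreal, hcard⟩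
    have hM0 : ((M:ℕ):ℤ) ≠ 0 := by exact_mod_cast hM.ne'
    haveI hfin : Finite (O ⧸ I) := Nat.finite_of_card_ne_zero (by rw [hcard]; exact hM.ne')
    obtain ⟨g, hg⟩ := hprim.exists_generator
    have hgtop : AddSubgroup.zmultiples g = ⊤ := (AddSubgroup.eq_top_iff' _).mpr hg
    have hordg : addOrderOf g = M := by
      rw [← Nat.card_zmultiples g, hgtop, ← hcard]
      exact Nat.card_congr AddSubgroup.topEquiv.toEquiv
    have hg1 : addOrderOf g ∣ addOrderOf (1 : O ⧸ I) := by
      apply addOrderOf_dvd_of_nsmul_eq_zero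
      have h0 : (addOrderOf (1 : O ⧸ I)) • (1 : O ⧸ I) = 0 := addOrderOf_nsmul_eq_zero 1
      calc (addOrderOf (1 : O ⧸ I)) • g
          = ((addOrderOf (1 : O ⧸ I)) • (1 : O ⧸ I)) * g := by rw [smul_mul_assoc, one_mul]
        _ = 0 := by rw [h0, zero_mul]
    have hord1 : addOrderOf (1 : O ⧸ I) = M :=
      Nat.dvd_antisymm (hcard ▸ addOrderOf_dvd_natCard _) (hordg ▸ hg1)
    haveI hchar : CharP (O ⧸ I) M := hord1 ▸ CharP.addOrderOf_one _
    have hint : ∀ t : ℤ, ((t : ℤ) : O ⧸ I) = 0 ↔ (M:ℤ) ∣ t := fun t =>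
      CharP.intCast_eq_zero_iff _ M t
    have h1top : AddSubgroup.zmultiples (1 : O ⧸ I) = ⊤ := by
      apply AddSubgroup.eq_top_of_card_eq
      rw [Nat.card_zmultiples, hord1, hcard]
    obtain ⟨m, hm⟩ : ∃ n : ℤ, n • (1 : O ⧸ I) = Ideal.Quotient.mk I (el 0 1) :=
      AddSubgroup.mem_zmultiples_iff.mp (h1top ▸ AddSubgroup.mem_top _)
    have hmz : Ideal.Quotient.mk I (el 0 1) = ((m : ℤ) : O ⧸ I) := by
      rw [← hm, zsmul_eq_mul, mul_one]
    have hmemI : ∀ u v : ℤ, el u v ∈ I ↔ (M:ℤ) ∣ (u + v * m) := by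
      intro u v
      rw [← Ideal.Quotient.eq_zero_iff_mem]
      have helc : el u v = (u : O) + (v : O) * (el 0 1) := by
        apply Subtype.ext
        push_cast
        ring
      rw [helc, map_add, map_mul, map_intCast, map_intCast, hmz]
      rw [← Int.cast_mul, ← Int.cast_add]
      exact hint _
    have hτm : el (-m) 1 ∈ I := by rw [hmemI]; exact ⟨0, by ring⟩
    have hMI : el M 0 ∈ I := by rw [hmemI]; exact ⟨1, by ring⟩
    have hsq : (⟨τ, Subring.subset_closure rfl⟩ : O) * el (-m) 1 = el (-c) (-(b+m)) := by
      apply Subtype.ext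
      simp only [hel_def]; push_cast
      linear_combination hbc
    have h1 : el (-c) (-(b+m)) ∈ I := hsq ▸ I.mul_mem_left _ hτm
    have h2 : (M:ℤ) ∣ (-c + (-(b+m)) * m) := (hmemI _ _).mp h1
    obtain ⟨k0, hk0⟩ := h2
    have hfmk : m ^ 2 + b * m + c = (M:ℤ) * (-k0) := by linear_combination -hk0
    -- real condition
    have hb2 : (M:ℤ) ∣ (b + 2 * m) := by
      obtain ⟨z, hzI, hz⟩ := hreal (el (-m) 1) hτm
      have hz' : (z : K) = ((-(b+m) : ℤ) : K) + ((-1 : ℤ) : K) * τ := by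
        rw [hz]
        show σ (((-m : ℤ):K) + ((1:ℤ):K) * τ) = _
        rw [map_add, map_mul, map_intCast, map_intCast, hστ]
        push_cast
        ring
      have hzel : z = el (-(b+m)) (-1) := Subtype.ext hz'
      rw [hzel] at hzI
      have h3 := (hmemI _ _).mp hzI
      have h4 : -(b+m) + (-1) * m = -(b + 2*m) := by ring
      rw [h4] at h3
      exact dvd_neg.mp h3
    refine ⟨m, -k0, hfmk, hb2, ?_⟩
    apply aux_coprime_of_no_prime' hM0
    intro p hp hpM hpk
    obtain ⟨M₁, hM₁⟩ := hpM
    obtain ⟨k₁, hk₁⟩ := hpk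
    obtain ⟨t, ht⟩ := hb2
    have hpK : ((p:ℕ):K) ≠ 0 := Nat.cast_ne_zero.mpr hp.ne_zero
    set x : K := (τ - (m:K)) / (p:K) with hx_def
    have hx : ∀ y : O, y ∈ I → ∃ z : O, z ∈ I ∧ (z : K) = x * (y : K) := by
      intro y hyI
      have hyel : y = el (U y) (V y) := Subtype.ext (hUV y)
      have hMuv : (M:ℤ) ∣ (U y + V y * m) := by
        rw [hyel] at hyI
        exact (hmemI _ _).mp hyI
      obtain ⟨w, hw⟩ := hMuv
      refine ⟨el (-(w * M₁ - V y * M₁ * t) * m + (-(V y * k₁)) * M) (w * M₁ - V y * M₁ * t),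
        ?_, ?_⟩
      · rw [hmemI]
        exact ⟨-(V y * k₁), by ring⟩
      · apply mul_left_cancel₀ hpK
        have hpx : ((p:ℕ):K) * x = τ - (m:K) := by
          rw [hx_def, mul_div_cancel₀ _ hpK]
        rw [← mul_assoc, hpx]
        have e1 : (U y : K) + (V y : K) * (m : K) = ((M:ℕ):K) * (w:K) := by exact_mod_cast congrArg (Int.cast : ℤ → K) hw
        have e2 : (b : K) + 2 * (m:K) = ((M:ℕ):K) * (t:K) := by exact_mod_cast congrArg (Int.cast : ℤ → K) ht
        have e3 : ((M:ℕ):K) = ((p:ℕ):K) * (M₁:K) := by exact_mod_cast congrArg (Int.cast : ℤ → K) hM₁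
        have e4 : (-k0 : K) = ((p:ℕ):K) * (k₁:K) := by exact_mod_cast congrArg (Int.cast : ℤ → K) hk₁
        have e5 : (m:K)^2 + (b:K) * (m:K) + (c:K) = ((M:ℕ):K) * (-k0 : K) := by
          exact_mod_cast congrArg (Int.cast : ℤ → K) hfmk
        rw [hUV y]
        simp only [hel_def]; push_cast
        linear_combination (-(((w:K)) - (V y : K) * (t:K)) * (τ - (m:K))) * e3
          + (V y : K) * ((M:ℕ):K) * e4 - (τ - (m:K)) * e1 + (V y:K) * (τ - (m:K)) * e2
          + (V y:K) * e5 - (V y:K) * hbc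
    have hxO : x ∈ O := (hprop x).mp hx
    obtain ⟨Ux, Vx, hxuv⟩ := (hmem x).mp hxO
    have hxp : ((-m : ℤ) : K) + ((1 : ℤ) : K) * τ = ((p * Ux : ℤ) : K) + ((p * Vx : ℤ) : K) * τ := by
      have h6 : ((p:ℕ):K) * x = τ - (m:K) := by rw [hx_def, mul_div_cancel₀ _ hpK]
      rw [hxuv] at h6
      push_cast
      linear_combination -h6
    have h7 := aux_unique_int hirr hxp
    have h8 : (p:ℤ) ∣ 1 := ⟨Vx, h7.2⟩
    exact aux_not_unit_prime' hp (isUnit_of_dvd_one h8)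
  · rintro ⟨m, k, hk, hb2, hcop⟩
    haveI : NeZero M := ⟨hM.ne'⟩
    have hM0 : ((M:ℕ):ℤ) ≠ 0 := by exact_mod_cast hM.ne'
    -- coordinate arithmetic of O
    have hadd : ∀ x y : O, U (x + y) = U x + U y ∧ V (x + y) = V x + V y := by
      intro x y
      apply hUV' (x + y)
      push_cast
      rw [hUV x, hUV y]
      ring
    have hmul : ∀ x y : O, U (x * y) = U x * U y - c * (V x * V y) ∧
        V (x * y) = U x * V y + U y * V x - b * (V x * V y) := by
      intro x y
      apply hUV' (x * y)
      push_cast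
      rw [hUV x, hUV y]
      linear_combination ((V x : K) * (V y : K)) * hbc
    have hzero : U 0 = 0 ∧ V 0 = 0 := hUV' 0 0 0 (by push_cast; ring)
    have hone : U 1 = 1 ∧ V 1 = 0 := hUV' 1 1 0 (by push_cast; ring)
    -- the ideal
    set I : Ideal O :=
      { carrier := {x : O | (M : ℤ) ∣ (U x + V x * m)}
        add_mem' := by
          intro x y hx hy
          simp only [Set.mem_setOf_eq] at hx hy ⊢
          rw [(hadd x y).1, (hadd x y).2]
          have he : U x + U y + (V x + V y) * m = (U x + V x * m) + (U y + V y * m) := by ring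
          rw [he]
          exact dvd_add hx hy
        zero_mem' := by
          simp only [Set.mem_setOf_eq, hzero.1, hzero.2]
          simp
        smul_mem' := by
          intro r x hx
          simp only [Set.mem_setOf_eq, smul_eq_mul] at hx ⊢
          rw [(hmul r x).1, (hmul r x).2]
          have key : U r * U x - c * (V r * V x) + (U r * V x + U x * V r - b * (V r * V x)) * m
              = U r * (U x + V x * m) + (V r * m) * (U x + V x * m) - (V r * V x) * ((M:ℤ) * k) := by
            linear_combination (-(V r * V x)) * hk
          rw [key]
          exact dvd_sub (dvd_add (hx.mul_left _) (hx.mul_left _)) ⟨V r * V x * k, by ring⟩ } with hI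
    have hmemI : ∀ x : O, x ∈ I ↔ (M : ℤ) ∣ (U x + V x * m) := fun x => Iff.rfl
    -- the ring hom to ZMod M
    set φ : O →+* ZMod M :=
      { toFun := fun x => ((U x + V x * m : ℤ) : ZMod M)
        map_one' := by show ((U 1 + V 1 * m : ℤ) : ZMod M) = 1; rw [hone.1, hone.2]; simp
        map_zero' := by show ((U 0 + V 0 * m : ℤ) : ZMod M) = 0; rw [hzero.1, hzero.2]; simp
        map_add' := by
          intro x y
          show ((U (x+y) + V (x+y) * m : ℤ) : ZMod M) = ((U x + V x * m : ℤ) : ZMod M) + ((U y + V y * m : ℤ) : ZMod M)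
          rw [(hadd x y).1, (hadd x y).2]
          push_cast
          ring
        map_mul' := by
          intro x y
          show ((U (x*y) + V (x*y) * m : ℤ) : ZMod M) = ((U x + V x * m : ℤ) : ZMod M) * ((U y + V y * m : ℤ) : ZMod M)
          rw [(hmul x y).1, (hmul x y).2]
          have hdvd : (M:ℤ) ∣ ((U x + V x * m) * (U y + V y * m)
              - (U x * U y - c * (V x * V y) + (U x * V y + U y * V x - b * (V x * V y)) * m)) := by
            refine ⟨(V x * V y) * k, ?_⟩
            linear_combination (V x * V y) * hk
          have h0 : (((U x + V x * m) * (U y + V y * m)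
              - (U x * U y - c * (V x * V y) + (U x * V y + U y * V x - b * (V x * V y)) * m) : ℤ) : ZMod M) = 0 :=
            (ZMod.intCast_zmod_eq_zero_iff_dvd _ _).mpr hdvd
          push_cast at h0 ⊢
          linear_combination -h0 } with hφ
    have hker : RingHom.ker φ = I := by
      ext x
      rw [RingHom.mem_ker]
      show ((U x + V x * m : ℤ) : ZMod M) = 0 ↔ _
      rw [ZMod.intCast_zmod_eq_zero_iff_dvd]
      exact Iff.rfl
    have hsurj : Function.Surjective φ := by
      intro r
      obtain ⟨t, rfl⟩ := ZMod.intCast_surjective r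
      refine ⟨el t 0, ?_⟩
      show ((U (el t 0) + V (el t 0) * m : ℤ) : ZMod M) = _
      rw [(hcoel t 0).1, (hcoel t 0).2]
      push_cast
      ring
    let e : (O ⧸ I) ≃+* ZMod M :=
      (Ideal.quotEquivOfEq hker.symm).trans (RingHom.quotientKerEquivOfSurjective hsurj)
    refine ⟨I, ?_, ?_, ?_, ?_⟩
    · exact isAddCyclic_of_surjective e.symm.toAddMonoidHom e.symm.surjective
    · -- proper
      intro x
      constructor
      · intro h
        have hMK : ((M:ℕ):K) ≠ 0 := Nat.cast_ne_zero.mpr hM.ne'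
        obtain ⟨z₁, hz₁I, hz₁⟩ := h (el M 0) (by
          rw [hmemI, (hcoel M 0).1, (hcoel M 0).2]
          exact ⟨1, by push_cast; ring⟩)
        obtain ⟨z₂, hz₂I, hz₂⟩ := h (el (-m) 1) (by
          rw [hmemI, (hcoel (-m) 1).1, (hcoel (-m) 1).2]
          exact ⟨0, by push_cast; ring⟩)
        have hxM : x * ((M:ℕ):K) = (U z₁ : K) + (V z₁ : K) * τ := by
          rw [← hUV z₁, hz₁]
          simp only [hel_def]; push_cast
          ring
        have hz₂K : (z₂ : K) = x * (τ - (m:K)) := by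
          rw [hz₂]
          simp only [hel_def]; push_cast
          ring
        have hE : (((M:ℤ) * U z₂ : ℤ) : K) + (((M:ℤ) * V z₂ : ℤ) : K) * τ
            = ((-(U z₁) * m - V z₁ * c : ℤ) : K) + ((U z₁ - V z₁ * (b + m) : ℤ) : K) * τ := by
          push_cast
          have h3 : ((M:ℕ):K) * (z₂ : K) = ((U z₁ : K) + (V z₁ : K) * τ) * (τ - (m:K)) := by
            rw [hz₂K, ← hxM]; ring
          rw [hUV z₂] at h3
          push_cast at h3
          linear_combination h3 + (V z₁ : K) * hbc
        have hE' := aux_unique_int hirr hE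
        have hE1 : (M:ℤ) * U z₂ = -(U z₁) * m - V z₁ * c := hE'.1
        have hE2 : (M:ℤ) * V z₂ = U z₁ - V z₁ * (b + m) := hE'.2
        have hz₂d : (M:ℤ) ∣ (U z₂ + V z₂ * m) := (hmemI z₂).mp hz₂I
        have hvk : U z₂ + V z₂ * m = -(V z₁ * k) := by
          have h4 : (M:ℤ) * (U z₂ + V z₂ * m) = (M:ℤ) * (-(V z₁ * k)) := by
            linear_combination hE1 + m * hE2 - (V z₁) * hk
          exact mul_left_cancel₀ hM0 h4
        have hMv : (M:ℤ) ∣ V z₁ := by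
          apply hcop.dvd_of_dvd_mul_right
          rw [hvk] at hz₂d
          exact (dvd_neg.mp hz₂d)
        have hMu : (M:ℤ) ∣ U z₁ := by
          have h5 := (hmemI z₁).mp hz₁I
          have h6 : U z₁ = (U z₁ + V z₁ * m) - (V z₁) * m := by ring
          rw [h6]
          exact dvd_sub h5 (hMv.mul_right m)
        obtain ⟨u₁, hu₁⟩ := hMu
        obtain ⟨v₁, hv₁⟩ := hMv
        rw [hmem]
        refine ⟨u₁, v₁, ?_⟩
        apply mul_right_cancel₀ hMK
        rw [hxM, hu₁, hv₁]
        push_cast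
        ring
      · intro hx y hy
        refine ⟨⟨x, hx⟩ * y, I.mul_mem_left _ hy, by push_cast; ring⟩
    · -- real
      intro y hy
      refine ⟨el (U y - b * V y) (-(V y)), ?_, ?_⟩
      · rw [hmemI, (hcoel _ _).1, (hcoel _ _).2]
        have he : U y - b * V y + -(V y) * m = (U y + V y * m) - V y * (b + 2 * m) := by ring
        rw [he]
        exact dvd_sub ((hmemI y).mp hy) (hb2.mul_left _)
      · rw [hUV y]
        rw [map_add, map_mul, map_intCast, map_intCast, hστ]
        simp only [hel_def]; push_cast
        ring
    · rw [Nat.card_congr e.toEquiv, Nat.card_zmod]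

/-- Let `𝒪 = ℤ[τ]` be an order in an imaginary quadratic field `K` with
complex conjugation `σ`, and let `N` be a positive integer.  There is a primitive, proper,
real ideal of `𝒪` of index `N` iff for each prime `ℓᵢ ∣ N` there is a primitive, proper,
real ideal of `𝒪` of index `ℓᵢ^{aᵢ}`, where `ℓᵢ^{aᵢ} ∥ N`. -/
theorem exists_primitive_proper_real_iff_prime_powers
    (K : Type*) [Field K] [Algebra ℚ K]
    (hdim : Module.finrank ℚ K = 2) (himag : IsEmpty (K →+* ℝ))
    (σ : K →+* K) (hσ : σ ≠ RingHom.id K)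
    (τ : K) (hint : ∃ b c : ℤ, τ ^ 2 + (b : K) * τ + (c : K) = 0)
    (hirr : τ ∉ Set.range (algebraMap ℚ K))
    (N : ℕ) (hN : 0 < N) :
    (∃ I : Ideal (Subring.closure {τ} : Subring K),
        IsPrimitiveIdeal (Subring.closure {τ}) I ∧ IsProperIdeal (Subring.closure {τ}) I ∧
        IsRealIdeal σ (Subring.closure {τ}) I ∧
        Nat.card ((Subring.closure {τ} : Subring K) ⧸ I) = N) ↔
    (∀ ℓ ∈ N.primeFactors, ∃ I : Ideal (Subring.closure {τ} : Subring K),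
        IsPrimitiveIdeal (Subring.closure {τ}) I ∧ IsProperIdeal (Subring.closure {τ}) I ∧
        IsRealIdeal σ (Subring.closure {τ}) I ∧
        Nat.card ((Subring.closure {τ} : Subring K) ⧸ I) = ℓ ^ (N.factorization ℓ)) := by
  obtain ⟨b, c, hbc⟩ := hint
  have hστ : σ τ = -(b : K) - τ := aux_sigma_tau hdim σ hσ hbc hirr
  rw [aux_key σ τ b c hbc hirr hστ N hN, aux_arith b c N hN]
  refine forall_congr' fun ℓ => forall_congr' fun hℓ => ?_
  exact (aux_key σ τ b c hbc hirr hστ _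
    (pow_pos (Nat.prime_of_mem_primeFactors hℓ).pos _)).symm
end

section
/- Let Λ ⊆ Λ′ be two lattices (rank-2 ℤ-submodules spanning K over ℚ) in an imaginary quadratic field K with [Λ′ : Λ] = ℓ a prime, and let 𝒪 = ℤ + 𝔣𝒪_K and 𝒪′ = ℤ + 𝔣′𝒪_K be their respective multiplier rings (orders of conductors 𝔣, 𝔣′). Then 𝔣 divides ℓ𝔣′ and 𝔣′ divides ℓ𝔣; in particular 𝔣/𝔣′ ∈ {1/ℓ, 1, ℓ}. -/
variable {K : Type*} [Field K]

/-- The order `ℤ + f·𝒪_K` of conductor `f` in `K`. -/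
noncomputable def condOrder (K : Type*) [Field K] (f : ℕ) : Subring K :=
  Subring.closure ((fun y : K => (f : K) * y) '' (integralClosure ℤ K : Set K))

/-- A lattice in a quadratic field `K`: a finitely generated `ℤ`-submodule spanning `K`
over `ℚ` (every element of `K` has a nonzero integer multiple in it). -/
def IsLattice (Λ : Submodule ℤ K) : Prop :=
  Λ.FG ∧ ∀ x : K, ∃ n : ℤ, n ≠ 0 ∧ (n : K) * x ∈ Λ

lemma mem_condOrder_iff {K : Type*} [Field K] (f : ℕ) (x : K) :
    x ∈ condOrder K f ↔ ∃ a : ℤ, ∃ t ∈ integralClosure ℤ K, x = (a : K) + (f : K) * t := by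
  constructor
  · intro hx
    induction hx using Subring.closure_induction with
    | mem y hy =>
      obtain ⟨t, ht, rfl⟩ := hy
      exact ⟨0, t, ht, by simp⟩
    | zero => exact ⟨0, 0, Subalgebra.zero_mem _, by simp⟩
    | one => exact ⟨1, 0, Subalgebra.zero_mem _, by simp⟩
    | add u v hu hv ihu ihv =>
      obtain ⟨a, t, ht, rfl⟩ := ihu
      obtain ⟨b, s, hs, rfl⟩ := ihv
      exact ⟨a + b, t + s, add_mem ht hs, by push_cast; ring⟩
    | neg u hu ihu =>
      obtain ⟨a, t, ht, rfl⟩ := ihu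
      exact ⟨-a, -t, neg_mem ht, by push_cast; ring⟩
    | mul u v hu hv ihu ihv =>
      obtain ⟨a, t, ht, rfl⟩ := ihu
      obtain ⟨b, s, hs, rfl⟩ := ihv
      refine ⟨a * b, (b : K) * t + (a : K) * s + (f : K) * (t * s), ?_, by push_cast; ring⟩
      have hbK : (b : K) ∈ integralClosure ℤ K := by
        exact_mod_cast intCast_mem (integralClosure ℤ K) b
      have haK : (a : K) ∈ integralClosure ℤ K := by
        exact_mod_cast intCast_mem (integralClosure ℤ K) a
      have hfK : ((f : ℤ) : K) ∈ integralClosure ℤ K :=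
        intCast_mem (integralClosure ℤ K) f
      have : ((f : ℤ) : K) = (f : K) := by push_cast; ring
      exact add_mem (add_mem (mul_mem hbK ht) (mul_mem haK hs))
        (mul_mem (this ▸ hfK) (mul_mem ht hs))
  · rintro ⟨a, t, ht, rfl⟩
    exact add_mem (intCast_mem (condOrder K f) a)
      (Subring.subset_closure ⟨t, ht, rfl⟩)

set_option maxHeartbeats 1000000 in
lemma aux_dvd_s10 (K : Type*) [Field K] [Algebra ℚ K] (hdim : Module.finrank ℚ K = 2)
    (m n : ℕ)
    (h : ∀ θ ∈ integralClosure ℤ K, ∃ a : ℤ, ∃ τ ∈ integralClosure ℤ K,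
        (m : K) * θ = (a : K) + (n : K) * τ) :
    (n : ℤ) ∣ (m : ℤ) := by
  haveI : FiniteDimensional ℚ K := FiniteDimensional.of_finrank_eq_succ hdim
  haveI : CharZero K := charZero_of_injective_algebraMap (algebraMap ℚ K).injective
  haveI : Module.Finite ℤ (integralClosure ℤ K) := IsIntegralClosure.finite ℤ ℚ K _
  set O := integralClosure ℤ K with hO
  let N : Submodule ℤ O := Submodule.span ℤ {1}
  -- membership in N
  have hmemN : ∀ θ : O, θ ∈ N ↔ ∃ b : ℤ, (θ : K) = (b : K) := by
    intro θ
    constructor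
    · intro hθ
      obtain ⟨b, hb⟩ := Submodule.mem_span_singleton.mp hθ
      exact ⟨b, by rw [← hb]; push_cast [zsmul_eq_mul]; ring⟩
    · rintro ⟨b, hb⟩
      refine Submodule.mem_span_singleton.mpr ⟨b, ?_⟩
      apply Subtype.ext
      push_cast [zsmul_eq_mul]
      rw [← hb]; ring
  -- torsion-free quotient
  haveI : NoZeroSMulDivisors ℤ (O ⧸ N) := by
    refine ⟨fun {c q} hcq => ?_⟩
    by_cases hc : c = 0
    · exact Or.inl hc
    right
    obtain ⟨θ, rfl⟩ := Submodule.Quotient.mk_surjective N q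
    rw [← Submodule.Quotient.mk_smul, Submodule.Quotient.mk_eq_zero] at hcq
    obtain ⟨a, ha⟩ := Submodule.mem_span_singleton.mp hcq
    -- ha : a • 1 = c • θ  in O
    have haK : (a : K) = (c : K) * (θ : K) := by
      have := congrArg (Subtype.val) ha
      push_cast [zsmul_eq_mul] at this
      simpa using this
    have hquot : algebraMap ℚ K ((a : ℚ) / (c : ℚ)) = (θ : K) := by
      have hc' : (c : K) ≠ 0 := Int.cast_ne_zero.mpr hc
      rw [map_div₀, map_intCast, map_intCast, haK, mul_div_cancel_left₀ _ hc']
    have hint : IsIntegral ℤ ((a : ℚ) / (c : ℚ)) := by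
      rw [← isIntegral_algebraMap_iff (algebraMap ℚ K).injective, hquot]
      exact θ.2
    obtain ⟨b, hb⟩ := IsIntegrallyClosed.isIntegral_iff.mp hint
    rw [Submodule.Quotient.mk_eq_zero]
    refine (hmemN θ).mpr ⟨b, ?_⟩
    rw [← hquot, ← hb]
    simp [algebraMap_int_eq]
  -- nontrivial quotient
  have hnt : ∃ q : O ⧸ N, q ≠ 0 := by
    have hx : ∃ x : K, x ∉ Submodule.span ℚ {(1 : K)} := by
      by_contra h'
      push_neg at h'
      have htop : Submodule.span ℚ {(1 : K)} = ⊤ := eq_top_iff.2 fun x _ => h' x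
      have h1 : Module.finrank ℚ (Submodule.span ℚ {(1 : K)}) = 1 :=
        finrank_span_singleton one_ne_zero
      rw [htop, finrank_top, hdim] at h1
      omega
    obtain ⟨x, hx⟩ := hx
    have halg : IsAlgebraic ℤ x :=
      (IsFractionRing.isAlgebraic_iff ℤ ℚ K).mpr (IsAlgebraic.of_finite ℚ x)
    obtain ⟨y, hy, hint⟩ := halg.exists_integral_multiple
    obtain ⟨θ, hxy⟩ : ∃ θ : O, algebraMap ℤ K y * x = (θ : K) :=
      ⟨⟨y • x, hint⟩, by
        show algebraMap ℤ K y * x = y • x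
        rw [zsmul_eq_mul, algebraMap_int_eq, eq_intCast]⟩
    refine ⟨Submodule.Quotient.mk θ, ?_⟩
    rw [Ne, Submodule.Quotient.mk_eq_zero]
    intro hmem
    obtain ⟨b, hb⟩ := (hmemN θ).mp hmem
    apply hx
    have hyK' : ((y : ℤ) : K) ≠ 0 := Int.cast_ne_zero.mpr hy
    have : x = ((b : ℚ) / (y : ℚ)) • (1 : K) := by
      have hxv : ((y : ℤ) : K) * x = (b : K) := by
        rw [← hb, ← hxy, algebraMap_int_eq, eq_intCast]
      rw [Algebra.smul_def, map_div₀, map_intCast, map_intCast, mul_one,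
        eq_div_iff hyK', mul_comm, hxv]
    rw [this]
    exact Submodule.smul_mem _ _ (Submodule.mem_span_singleton_self 1)
  haveI : Nontrivial (O ⧸ N) := ⟨hnt.choose, 0, hnt.choose_spec⟩
  haveI : Module.Free ℤ (O ⧸ N) := Module.free_of_finite_type_torsion_free'
  -- pick a basis vector
  let b := Module.Free.chooseBasis ℤ (O ⧸ N)
  haveI : Nonempty (Module.Free.ChooseBasisIndex ℤ (O ⧸ N)) := b.index_nonempty
  obtain ⟨i⟩ := (inferInstance : Nonempty (Module.Free.ChooseBasisIndex ℤ (O ⧸ N)))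
  obtain ⟨θ, hθ⟩ := Submodule.Quotient.mk_surjective N (b i)
  obtain ⟨a, τ, hτ, heq⟩ := h (θ : K) θ.2
  -- lift the equation to O
  have heqO : (m : ℤ) • θ = (a : ℤ) • (1 : O) + (n : ℤ) • (⟨τ, hτ⟩ : O) := by
    apply Subtype.ext
    push_cast [zsmul_eq_mul]
    rw [heq]; push_cast; ring
  have heqQ : (m : ℤ) • (b i) = (n : ℤ) • Submodule.Quotient.mk (p := N) (⟨τ, hτ⟩ : O) := by
    rw [← hθ, ← Submodule.Quotient.mk_smul, ← Submodule.Quotient.mk_smul, heqO]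
    rw [Submodule.Quotient.mk_add,
      (Submodule.Quotient.mk_eq_zero N).mpr
        (Submodule.smul_mem _ _ (Submodule.mem_span_singleton_self 1)), zero_add]
  have hrepr := congrArg b.repr heqQ
  rw [LinearEquiv.map_smul, LinearEquiv.map_smul] at hrepr
  have hcoord := congrArg (fun g : _ →₀ ℤ => g i) hrepr
  simp only [Finsupp.smul_apply, smul_eq_mul, Module.Basis.repr_self, Finsupp.single_eq_same,
    mul_one] at hcoord
  exact hcoord ▸ dvd_mul_right _ _

lemma ratio_lemma (ℓ f f' : ℕ) (hℓ : ℓ.Prime) (hf : 0 < f) (hf' : 0 < f')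
    (h1 : f ∣ ℓ * f') (h2 : f' ∣ ℓ * f) :
    (f : ℚ) / (f' : ℚ) = 1 / (ℓ : ℚ) ∨ (f : ℚ) / (f' : ℚ) = 1 ∨
      (f : ℚ) / (f' : ℚ) = (ℓ : ℚ) := by
  set g := Nat.gcd f f' with hg
  have hgpos : 0 < g := Nat.gcd_pos_of_pos_left _ hf
  set a := f / g with hadef
  set b := f' / g with hbdef
  have hfa : f = g * a := (Nat.mul_div_cancel' (Nat.gcd_dvd_left f f')).symm
  have hfb : f' = g * b := (Nat.mul_div_cancel' (Nat.gcd_dvd_right f f')).symm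
  have cop : Nat.Coprime a b := Nat.coprime_div_gcd_div_gcd hgpos
  have hadvd : a ∣ ℓ := by
    refine cop.dvd_of_dvd_mul_right ?_
    have : g * a ∣ g * (ℓ * b) := by rw [← hfa]; rw [hfb] at h1; convert h1 using 1; ring
    exact (Nat.mul_dvd_mul_iff_left hgpos).mp this
  have hbdvd : b ∣ ℓ := by
    refine cop.symm.dvd_of_dvd_mul_right ?_
    have : g * b ∣ g * (ℓ * a) := by rw [← hfb]; rw [hfa] at h2; convert h2 using 1; ring
    exact (Nat.mul_dvd_mul_iff_left hgpos).mp this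
  have hbpos : 0 < b := Nat.div_pos (Nat.le_of_dvd hf' (Nat.gcd_dvd_right f f')) hgpos
  have hr : (f : ℚ) / (f' : ℚ) = (a : ℚ) / (b : ℚ) := by
    rw [hfa, hfb]
    push_cast
    rw [mul_div_mul_left _ _ (by exact_mod_cast hgpos.ne' : (g : ℚ) ≠ 0)]
  rcases (Nat.Prime.eq_one_or_self_of_dvd hℓ a hadvd) with ha | ha <;>
    rcases (Nat.Prime.eq_one_or_self_of_dvd hℓ b hbdvd) with hb | hb
  · right; left; rw [hr, ha, hb]; norm_num
  · left; rw [hr, ha, hb]; push_cast; ring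
  · right; right; rw [hr, ha, hb]; push_cast; simp
  · exfalso
    have := cop
    rw [ha, hb, Nat.coprime_self] at this
    exact hℓ.one_lt.ne' this

/-- Let `Λ ⊆ Λ′` be lattices in an imaginary quadratic field `K` with
`[Λ′ : Λ] = ℓ` prime, and suppose their multiplier rings are the orders of conductors
`f` and `f′`.  Then `f ∣ ℓf′` and `f′ ∣ ℓf`; in particular `f/f′ ∈ {1/ℓ, 1, ℓ}`. -/
theorem conductor_dvd_of_index_prime
    (K : Type*) [Field K] [Algebra ℚ K]
    (hdim : Module.finrank ℚ K = 2) (himag : IsEmpty (K →+* ℝ))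
    (ℓ : ℕ) (hℓ : ℓ.Prime)
    (Λ Λ' : Submodule ℤ K) (hΛ : IsLattice Λ) (hΛ' : IsLattice Λ') (hle : Λ ≤ Λ')
    (hindex : Nat.card (Λ' ⧸ (Λ.comap Λ'.subtype)) = ℓ)
    (f f' : ℕ) (hf : 0 < f) (hf' : 0 < f')
    (hmul : ∀ x : K, (∀ m ∈ Λ, x * m ∈ Λ) ↔ x ∈ condOrder K f)
    (hmul' : ∀ x : K, (∀ m ∈ Λ', x * m ∈ Λ') ↔ x ∈ condOrder K f') :
    (f : ℤ) ∣ (ℓ : ℤ) * (f' : ℤ) ∧ (f' : ℤ) ∣ (ℓ : ℤ) * (f : ℤ) ∧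
      ((f : ℚ) / (f' : ℚ) = 1 / (ℓ : ℚ) ∨ (f : ℚ) / (f' : ℚ) = 1 ∨
        (f : ℚ) / (f' : ℚ) = (ℓ : ℚ)) := by
  -- ℓ • Λ' ⊆ Λ
  have key : ∀ y ∈ Λ', (ℓ : K) * y ∈ Λ := by
    intro y hy
    haveI : Finite (Λ' ⧸ Λ.comap Λ'.subtype) :=
      Nat.finite_of_card_ne_zero (by rw [hindex]; exact hℓ.pos.ne')
    have hz : (ℓ : ℤ) • (Submodule.Quotient.mk (⟨y, hy⟩ : Λ') :
        Λ' ⧸ Λ.comap Λ'.subtype) = 0 := by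
      rw [Nat.cast_smul_eq_nsmul, ← hindex]
      exact card_nsmul_eq_zero'
    rw [← Submodule.Quotient.mk_smul, Submodule.Quotient.mk_eq_zero] at hz
    have : ((ℓ : ℤ) • (⟨y, hy⟩ : Λ') : K) ∈ Λ := hz
    simpa [zsmul_eq_mul] using this
  -- f' ∣ ℓ f
  have hd1 : (f' : ℤ) ∣ ((ℓ * f : ℕ) : ℤ) := by
    apply aux_dvd_s10 K hdim
    intro θ hθ
    have h1 : (f : K) * θ ∈ condOrder K f :=
      (mem_condOrder_iff f _).mpr ⟨0, θ, hθ, by simp⟩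
    have h2 : ∀ m ∈ Λ, ((f : K) * θ) * m ∈ Λ := (hmul _).mpr h1
    have h3 : ∀ m ∈ Λ', (((ℓ * f : ℕ) : K) * θ) * m ∈ Λ' := by
      intro m hm
      have hrw : (((ℓ * f : ℕ) : K) * θ) * m = ((f : K) * θ) * ((ℓ : K) * m) := by
        push_cast; ring
      rw [hrw]
      exact hle (h2 _ (key m hm))
    exact (mem_condOrder_iff f' _).mp ((hmul' _).mp h3)
  -- f ∣ ℓ f'
  have hd2 : (f : ℤ) ∣ ((ℓ * f' : ℕ) : ℤ) := by
    apply aux_dvd_s10 K hdim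
    intro θ hθ
    have h1 : (f' : K) * θ ∈ condOrder K f' :=
      (mem_condOrder_iff f' _).mpr ⟨0, θ, hθ, by simp⟩
    have h2 : ∀ m ∈ Λ', ((f' : K) * θ) * m ∈ Λ' := (hmul' _).mpr h1
    have h3 : ∀ m ∈ Λ, (((ℓ * f' : ℕ) : K) * θ) * m ∈ Λ := by
      intro m hm
      have hrw : (((ℓ * f' : ℕ) : K) * θ) * m = (ℓ : K) * (((f' : K) * θ) * m) := by
        push_cast; ring
      rw [hrw]
      exact key _ (h2 m (hle hm))
    exact (mem_condOrder_iff f _).mp ((hmul _).mp h3)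
  have hn1 : f ∣ ℓ * f' := by exact_mod_cast hd2
  have hn2 : f' ∣ ℓ * f := by exact_mod_cast hd1
  refine ⟨by exact_mod_cast hd2, by exact_mod_cast hd1, ?_⟩
  exact ratio_lemma ℓ f f' hℓ hf hf' hn1 hn2
end
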